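/- Let μ be a Borel probability measure on ℝ integrating the function x ↦ exp(x²/4). Then for every z ∈ ℂ, the function x ↦ Σ_{n∈ℕ} |h_n(x)| |z|^n/n! is μ-integrable, and ∫ exp(zx − z²/2) μ(dx) = Σ_{n∈ℕ} (∫ h_n dμ) z^n/n!. -/

import Mathlib

open MeasureTheory

/-- The probabilists' Hermite polynomials over `ℝ`:
`h_0 = 1`, `h_{n+1}(x) = x h_n(x) - h_n'(x)`. -/
noncomputable def hermiteR : ℕ → Polynomial ℝ
  | 0 => 1
  | n + 1 => Polynomial.X * hermiteR n - Polynomial.derivative (hermiteR n)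

/-- If `μ` is a Borel probability measure on `ℝ` integrating `x ↦ exp(x²/4)`, then for every
`z ∈ ℂ` the function `x ↦ ∑_n |h_n(x)| |z|^n / n!` is `μ`-integrable and
`∫ exp(zx - z²/2) dμ = ∑_n (∫ h_n dμ) z^n / n!`. -/
lemma hermiteR_eq_map (n : ℕ) :
    hermiteR n = (Polynomial.hermite n).map (Int.castRingHom ℝ) := by
  induction n with
  | zero => simp [hermiteR, Polynomial.hermite]
  | succ n ih =>
    rw [hermiteR, Polynomial.hermite_succ, Polynomial.map_sub, Polynomial.map_mul,
      Polynomial.map_X, ← Polynomial.derivative_map, ih]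

noncomputable def dcoef {K : Type*} [DivisionRing K] (c : K) (k : ℕ) : K :=
  if Even k then c ^ (k / 2) / ((k / 2).factorial : K) else 0

lemma fact_two_mul (m : ℕ) :
    (2 * m).factorial = 2 ^ m * m.factorial * (2 * m - 1).doubleFactorial := by
  cases m with
  | zero => simp [Nat.doubleFactorial]
  | succ k =>
    have h1 : 2 * (k + 1) = (2 * k + 1) + 1 := by ring
    rw [h1, Nat.factorial_eq_mul_doubleFactorial]
    have h2 : 2 * k + 1 + 1 = 2 * (k + 1) := by ring
    rw [h2, Nat.doubleFactorial_two_mul]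
    rw [show 2 * (k + 1) - 1 = 2 * k + 1 from by omega]


lemma coeff_hermiteR (n j : ℕ) (hj : j ≤ n) :
    (hermiteR n).coeff j = ((n.factorial : ℝ) / (j.factorial : ℝ)) * dcoef (-1/2 : ℝ) (n - j) := by
  rw [hermiteR_eq_map, Polynomial.coeff_map]
  rcases Nat.even_or_odd (n + j) with he | ho
  · have hesub : Even (n - j) := by
      rw [Nat.even_sub hj]
      exact (Nat.even_add.mp he)
    obtain ⟨m, hm⟩ := hesub
    have hm2 : n - j = 2 * m := by omega
    rw [Polynomial.coeff_hermite_of_even_add he, dcoef, if_pos (hm2 ▸ (even_two_mul m)), hm2]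
    have hnat : n.factorial = n.choose j * j.factorial * (2 ^ m * m.factorial * (2 * m - 1).doubleFactorial) := by
      rw [← fact_two_mul m, ← hm2, Nat.choose_mul_factorial_mul_factorial hj]
    have hdiv : (2 * m) / 2 = m := by omega
    rw [hdiv]
    push_cast [hnat]
    have hm0 : (m.factorial : ℝ) ≠ 0 := Nat.cast_ne_zero.mpr m.factorial_ne_zero
    have hj0 : (j.factorial : ℝ) ≠ 0 := Nat.cast_ne_zero.mpr j.factorial_ne_zero
    rw [div_pow, neg_pow, neg_pow]
    field_simp
    simp only [eq_intCast]
    push_cast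
    ring
  · rw [Polynomial.coeff_hermite_of_odd_add ho, dcoef, if_neg, mul_zero]
    · simp
    intro h
    rw [Nat.even_sub hj] at h
    exact (Nat.not_even_iff_odd.mpr ho) (Nat.even_add.mpr h)

lemma hermiteR_eval_antidiag (n : ℕ) (x : ℝ) :
    (hermiteR n).eval x =
      ∑ p ∈ Finset.HasAntidiagonal.antidiagonal n,
        ((n.factorial : ℝ) / (p.1.factorial : ℝ)) * dcoef (-1/2 : ℝ) p.2 * x ^ p.1 := by
  rw [Finset.Nat.sum_antidiagonal_eq_sum_range_succ
    (fun j k => ((n.factorial : ℝ) / (j.factorial : ℝ)) * dcoef (-1/2 : ℝ) k * x ^ j)]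
  have hdeg : (hermiteR n).natDegree < n + 1 := by
    rw [hermiteR_eq_map]
    exact Nat.lt_succ_of_le (le_trans Polynomial.natDegree_map_le
      (le_of_eq Polynomial.natDegree_hermite))
  rw [Polynomial.eval_eq_sum_range' hdeg]
  refine Finset.sum_congr rfl fun j hj => ?_
  rw [coeff_hermiteR n j (Nat.lt_succ_iff.mp (Finset.mem_range.mp hj))]

lemma dcoef_abs (k : ℕ) : |dcoef (-1/2 : ℝ) k| = dcoef (2⁻¹ : ℝ) k := by
  unfold dcoef
  split_ifs with h
  · rw [abs_div, abs_pow, show |(-1/2 : ℝ)| = 2⁻¹ by norm_num, Nat.abs_cast]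
  · simp

lemma dcoef_ofReal (c : ℝ) (k : ℕ) : ((dcoef c k : ℝ) : ℂ) = dcoef (c : ℂ) k := by
  unfold dcoef
  split_ifs <;> push_cast <;> ring

lemma dcoef_nonneg (c : ℝ) (hc : 0 ≤ c) (k : ℕ) : 0 ≤ dcoef c k := by
  unfold dcoef
  split_ifs with h
  · positivity
  · exact le_refl _

open NormedSpace in
lemma hasSum_dcoef_mul {𝕜 : Type*} [RCLike 𝕜] (c w : 𝕜) :
    HasSum (fun k => dcoef c k * w ^ k) (NormedSpace.exp (c * w ^ 2)) := by
  have hbase : HasSum (fun m => (c * w ^ 2) ^ m / (m.factorial : 𝕜))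
      (NormedSpace.exp (c * w ^ 2)) := expSeries_div_hasSum_exp (c * w ^ 2)
  have hinj : Function.Injective (fun m : ℕ => 2 * m) := fun a b h => by simp only [] at h; omega
  have hzero : ∀ k ∉ Set.range (fun m : ℕ => 2 * m), dcoef c k * w ^ k = 0 := by
    intro k hk
    have : ¬ Even k := by
      intro ⟨m, hm⟩
      exact hk ⟨m, by simp only []; omega⟩
    rw [dcoef, if_neg this, zero_mul]
  rw [← hinj.hasSum_iff hzero]
  refine hbase.congr_fun fun m => ?_
  show dcoef c (2 * m) * w ^ (2 * m) = (c * w ^ 2) ^ m / ((m.factorial : 𝕜))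
  rw [dcoef, if_pos (even_two_mul m), Nat.mul_div_cancel_left m two_pos, mul_pow, ← pow_mul]
  ring

lemma summable_norm_dcoef_mul {𝕜 : Type*} [RCLike 𝕜] (c w : 𝕜) :
    Summable (fun k => ‖dcoef c k * w ^ k‖) := by
  have hinj : Function.Injective (fun m : ℕ => 2 * m) := fun a b h => by simp only [] at h; omega
  have hzero : ∀ k ∉ Set.range (fun m : ℕ => 2 * m), ‖dcoef c k * w ^ k‖ = 0 := by
    intro k hk
    have : ¬ Even k := by
      intro ⟨m, hm⟩
      exact hk ⟨m, by simp only []; omega⟩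
    rw [dcoef, if_neg this, zero_mul, norm_zero]
  rw [← hinj.summable_iff hzero]
  have : Summable (fun m : ℕ => ‖c * w ^ 2‖ ^ m / (m.factorial : ℝ)) :=
    Real.summable_pow_div_factorial _
  refine this.congr fun m => ?_
  show ‖c * w ^ 2‖ ^ m / ((m.factorial : ℝ)) = ‖dcoef c (2 * m) * w ^ (2 * m)‖
  rw [dcoef, if_pos (even_two_mul m), Nat.mul_div_cancel_left m two_pos]
  simp only [norm_mul, norm_div, norm_pow, RCLike.norm_natCast, ← pow_mul]
  ring

lemma summable_norm_xz (y : ℂ) : Summable (fun j : ℕ => ‖y ^ j / (j.factorial : ℂ)‖) := by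
  refine (Real.summable_pow_div_factorial ‖y‖).congr fun j => ?_
  rw [norm_div, norm_pow, RCLike.norm_natCast]

lemma tsum_hermite_eq_exp (x : ℝ) (z : ℂ) :
    ∑' n : ℕ, (((hermiteR n).eval x : ℝ) : ℂ) * z ^ n / (n.factorial : ℂ) =
      Complex.exp (z * (x : ℂ) - z ^ 2 / 2) := by
  have hf : Summable (fun j : ℕ => ‖((x : ℂ) * z) ^ j / (j.factorial : ℂ)‖) := summable_norm_xz _
  have hg : Summable (fun k : ℕ => ‖dcoef (-1/2 : ℂ) k * z ^ k‖) := summable_norm_dcoef_mul _ _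
  have key := tsum_mul_tsum_eq_tsum_sum_antidiagonal_of_summable_norm hf hg
  have h1 : ∑' j : ℕ, ((x : ℂ) * z) ^ j / (j.factorial : ℂ) = Complex.exp ((x : ℂ) * z) := by
    rw [Complex.exp_eq_exp_ℂ]
    exact (NormedSpace.expSeries_div_hasSum_exp ((x : ℂ) * z)).tsum_eq
  have h2 : ∑' k : ℕ, dcoef (-1/2 : ℂ) k * z ^ k = Complex.exp (-(z ^ 2) / 2) := by
    rw [Complex.exp_eq_exp_ℂ, show (-(z ^ 2) / 2 : ℂ) = (-1/2 : ℂ) * z ^ 2 by ring]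
    exact (hasSum_dcoef_mul (-1/2 : ℂ) z).tsum_eq
  rw [h1, h2, ← Complex.exp_add, show (x : ℂ) * z + -(z ^ 2) / 2 = z * (x : ℂ) - z ^ 2 / 2 by ring]
    at key
  rw [key]
  refine tsum_congr fun n => ?_
  have heval : (((hermiteR n).eval x : ℝ) : ℂ) =
      ∑ p ∈ Finset.HasAntidiagonal.antidiagonal n,
        ((n.factorial : ℂ) / (p.1.factorial : ℂ)) * dcoef (-1/2 : ℂ) p.2 * (x : ℂ) ^ p.1 := by
    rw [hermiteR_eval_antidiag]
    push_cast
    exact Finset.sum_congr rfl fun p _ => by rw [dcoef_ofReal]; norm_num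
  rw [heval, Finset.sum_mul, Finset.sum_div]
  refine Finset.sum_congr rfl fun p hp => ?_
  obtain ⟨j, k⟩ := p
  have hjk : j + k = n := Finset.HasAntidiagonal.mem_antidiagonal.mp hp
  subst hjk
  have hn0 : (((j + k).factorial : ℂ)) ≠ 0 := Nat.cast_ne_zero.mpr (j + k).factorial_ne_zero
  have hj0 : ((j.factorial : ℂ)) ≠ 0 := Nat.cast_ne_zero.mpr j.factorial_ne_zero
  rw [mul_pow, pow_add, div_eq_iff hn0]
  field_simp

lemma hermite_abs_bound (x r : ℝ) (hr : 0 ≤ r) :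
    Summable (fun n : ℕ => |(hermiteR n).eval x| * r ^ n / (n.factorial : ℝ)) ∧
    ∑' n : ℕ, |(hermiteR n).eval x| * r ^ n / (n.factorial : ℝ)
      ≤ Real.exp (|x| * r + r ^ 2 / 2) := by
  set a : ℕ → ℝ := fun j => (|x| * r) ^ j / (j.factorial : ℝ) with ha_def
  set b : ℕ → ℝ := fun k => dcoef (2⁻¹ : ℝ) k * r ^ k with hb_def
  have ha_nonneg : ∀ j, 0 ≤ a j := fun j => by positivity
  have hb_nonneg : ∀ k, 0 ≤ b k :=
    fun k => mul_nonneg (dcoef_nonneg _ (by norm_num) k) (pow_nonneg hr k)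
  have ha_s : Summable fun j => ‖a j‖ := by
    refine (Real.summable_pow_div_factorial (|x| * r)).congr fun j => ?_
    rw [Real.norm_eq_abs, abs_of_nonneg (ha_nonneg j)]
  have hb_s : Summable fun k => ‖b k‖ := by
    exact summable_norm_dcoef_mul (2⁻¹ : ℝ) r
  set S : ℕ → ℝ := fun n => ∑ p ∈ Finset.HasAntidiagonal.antidiagonal n, a p.1 * b p.2 with hS_def
  have hS_s : Summable fun n => ‖S n‖ := summable_norm_sum_mul_antidiagonal_of_summable_norm ha_s hb_s
  set t : ℕ → ℝ := fun n => |(hermiteR n).eval x| * r ^ n / (n.factorial : ℝ) with ht_def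
  have ht_nonneg : ∀ n, 0 ≤ t n := fun n => by positivity
  have hts : ∀ n, t n ≤ S n := by
    intro n
    have h1 : |(hermiteR n).eval x| ≤
        ∑ p ∈ Finset.HasAntidiagonal.antidiagonal n,
          ((n.factorial : ℝ) / (p.1.factorial : ℝ)) * dcoef (2⁻¹ : ℝ) p.2 * |x| ^ p.1 := by
      rw [hermiteR_eval_antidiag]
      refine (Finset.abs_sum_le_sum_abs _ _).trans (le_of_eq ?_)
      refine Finset.sum_congr rfl fun p _ => ?_
      rw [abs_mul, abs_mul, abs_pow, abs_div, dcoef_abs, Nat.abs_cast, Nat.abs_cast]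
    have h2 : t n ≤ (∑ p ∈ Finset.HasAntidiagonal.antidiagonal n,
        ((n.factorial : ℝ) / (p.1.factorial : ℝ)) * dcoef (2⁻¹ : ℝ) p.2 * |x| ^ p.1)
          * r ^ n / (n.factorial : ℝ) := by
      simp only [ht_def]
      gcongr
    refine h2.trans (le_of_eq ?_)
    rw [Finset.sum_mul, Finset.sum_div, hS_def]
    refine Finset.sum_congr rfl fun p hp => ?_
    obtain ⟨j, k⟩ := p
    have hjk : j + k = n := Finset.HasAntidiagonal.mem_antidiagonal.mp hp
    subst hjk
    have hn0 : (((j + k).factorial : ℝ)) ≠ 0 := Nat.cast_ne_zero.mpr (j + k).factorial_ne_zero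
    have hj0 : ((j.factorial : ℝ)) ≠ 0 := Nat.cast_ne_zero.mpr j.factorial_ne_zero
    rw [ha_def, hb_def]
    simp only [mul_pow, pow_add]
    rw [div_eq_iff hn0]
    field_simp
  have ht_s : Summable t := Summable.of_nonneg_of_le ht_nonneg
    (fun n => (hts n).trans (le_abs_self _)) hS_s.of_norm.abs
  constructor
  · exact ht_s
  · have := tsum_mul_tsum_eq_tsum_sum_antidiagonal_of_summable_norm ha_s hb_s
    have ha_t : ∑' j, a j = Real.exp (|x| * r) := by
      rw [Real.exp_eq_exp_ℝ]
      exact (NormedSpace.expSeries_div_hasSum_exp (|x| * r)).tsum_eq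
    have hb_t : ∑' k, b k = Real.exp (r ^ 2 / 2) := by
      rw [Real.exp_eq_exp_ℝ, show (r ^ 2 / 2 : ℝ) = (2⁻¹ : ℝ) * r ^ 2 by ring]
      exact (hasSum_dcoef_mul (2⁻¹ : ℝ) r).tsum_eq
    rw [ha_t, hb_t, ← Real.exp_add] at this
    calc ∑' n, t n ≤ ∑' n, S n := Summable.tsum_le_tsum hts ht_s hS_s.of_norm
    _ = Real.exp (|x| * r + r ^ 2 / 2) := this.symm

theorem hermite_series_integrable_and_sum (μ : Measure ℝ) [IsProbabilityMeasure μ]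
    (hint : Integrable (fun x => Real.exp (x ^ 2 / 4)) μ) (z : ℂ) :
    Integrable
      (fun x => ∑' n : ℕ, |(hermiteR n).eval x| * ‖z‖ ^ n / (n.factorial : ℝ)) μ ∧
    ∫ x, Complex.exp (z * (x : ℂ) - z ^ 2 / 2) ∂μ =
      ∑' n : ℕ, ((∫ x, (hermiteR n).eval x ∂μ : ℝ) : ℂ) * z ^ n / (n.factorial : ℂ) := by
  set r : ℝ := ‖z‖ with hr_def
  have hr : 0 ≤ r := norm_nonneg z
  set t : ℕ → ℝ → ℝ := fun n x => |(hermiteR n).eval x| * r ^ n / (n.factorial : ℝ) with ht_def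
  have ht_meas : ∀ n, Measurable (t n) := fun n =>
    (((hermiteR n).continuous.abs.mul continuous_const).div_const _).measurable
  have ht_nonneg : ∀ n x, 0 ≤ t n x := fun n x => by
    have := abs_nonneg ((hermiteR n).eval x); positivity
  have hbd := fun x : ℝ => hermite_abs_bound x r hr
  set F : ℝ → ℝ := fun x => ∑' n, t n x with hF_def
  have hF_nonneg : ∀ x, 0 ≤ F x := fun x => tsum_nonneg (fun n => ht_nonneg n x)
  have hF_eqE : ∀ x, (∑' n, ENNReal.ofReal (t n x)) = ENNReal.ofReal (F x) :=
    fun x => (ENNReal.ofReal_tsum_of_nonneg (fun n => ht_nonneg n x) (hbd x).1).symm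
  have hF_meas : Measurable F := by
    have hFi : F = fun x => (∑' n, ENNReal.ofReal (t n x)).toReal := by
      funext x
      rw [hF_eqE x, ENNReal.toReal_ofReal (hF_nonneg x)]
    rw [hFi]
    exact (Measurable.ennreal_tsum fun n => (ht_meas n).ennreal_ofReal).ennreal_toReal
  set G : ℝ → ℝ := fun x => Real.exp (|x| * r + r ^ 2 / 2) with hG_def
  have hFG : ∀ x, F x ≤ G x := fun x => (hbd x).2
  have hG_bound : ∀ x, G x ≤ Real.exp (r ^ 2 + r ^ 2 / 2) * Real.exp (x ^ 2 / 4) := by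
    intro x
    rw [hG_def, ← Real.exp_add]
    apply Real.exp_le_exp.mpr
    nlinarith [sq_nonneg (|x| / 2 - r), sq_abs x]
  have hG_cont : Continuous G :=
    Real.continuous_exp.comp ((continuous_abs.mul continuous_const).add continuous_const)
  have hG_int : Integrable G μ := by
    refine Integrable.mono' (hint.const_mul (Real.exp (r ^ 2 + r ^ 2 / 2)))
      hG_cont.aestronglyMeasurable (ae_of_all _ fun x => ?_)
    rw [Real.norm_eq_abs, abs_of_nonneg (Real.exp_pos _).le]
    exact hG_bound x
  have hF_int : Integrable F μ := by
    refine Integrable.mono' hG_int hF_meas.aestronglyMeasurable (ae_of_all _ fun x => ?_)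
    rw [Real.norm_eq_abs, abs_of_nonneg (hF_nonneg x)]
    exact hFG x
  refine ⟨hF_int, ?_⟩
  set f : ℕ → ℝ → ℂ :=
    fun n x => (((hermiteR n).eval x : ℝ) : ℂ) * z ^ n / (n.factorial : ℂ) with hf_def
  have hf_meas : ∀ n, AEStronglyMeasurable (f n) μ := fun n =>
    (((Complex.continuous_ofReal.comp (hermiteR n).continuous).mul
      continuous_const).div_const _).aestronglyMeasurable
  have hnorm : ∀ n x, (‖f n x‖₊ : ENNReal) = ENNReal.ofReal (t n x) := by
    intro n x
    rw [← enorm_eq_nnnorm, ← ofReal_norm]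
    congr 1
    simp only [hf_def, ht_def, norm_div, norm_mul, Complex.norm_real, norm_pow,
      RCLike.norm_natCast, Real.norm_eq_abs, hr_def]
  have hfin : ∑' n, ∫⁻ x, ‖f n x‖₊ ∂μ ≠ ⊤ := by
    have hcalc : ∑' n, ∫⁻ x, (‖f n x‖₊ : ENNReal) ∂μ ≤ ∫⁻ x, (‖G x‖₊ : ENNReal) ∂μ := by
      calc ∑' n, ∫⁻ x, (‖f n x‖₊ : ENNReal) ∂μ
          = ∑' n, ∫⁻ x, ENNReal.ofReal (t n x) ∂μ :=
            tsum_congr fun n => lintegral_congr fun x => hnorm n x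
        _ = ∫⁻ x, ∑' n, ENNReal.ofReal (t n x) ∂μ :=
            (lintegral_tsum fun n => ((ht_meas n).ennreal_ofReal).aemeasurable).symm
        _ = ∫⁻ x, ENNReal.ofReal (F x) ∂μ := lintegral_congr fun x => hF_eqE x
        _ ≤ ∫⁻ x, (‖G x‖₊ : ENNReal) ∂μ := by
            refine lintegral_mono fun x => ?_
            rw [← enorm_eq_nnnorm, Real.enorm_eq_ofReal ((hF_nonneg x).trans (hFG x))]
            exact ENNReal.ofReal_le_ofReal (hFG x)
    exact (hcalc.trans_lt hG_int.2).ne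
  have key := integral_tsum hf_meas hfin
  have hterm : ∀ n, ∫ x, f n x ∂μ =
      ((∫ x, (hermiteR n).eval x ∂μ : ℝ) : ℂ) * z ^ n / (n.factorial : ℂ) := by
    intro n
    simp only [hf_def, mul_div_assoc]
    rw [integral_mul_const]
    congr 1
    exact (integral_ofReal (𝕜 := ℂ))
  calc ∫ x, Complex.exp (z * (x : ℂ) - z ^ 2 / 2) ∂μ
      = ∫ x, ∑' n, f n x ∂μ :=
        integral_congr_ae (ae_of_all _ fun x => (tsum_hermite_eq_exp x z).symm)
    _ = ∑' n, ∫ x, f n x ∂μ := key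
    _ = ∑' n, ((∫ x, (hermiteR n).eval x ∂μ : ℝ) : ℂ) * z ^ n / (n.factorial : ℂ) :=
        tsum_congr hterm
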